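/- Let a, b, k be positive integers with b < a < 2b, k ≥ 1, let M = { ja : 1 ≤ j ≤ k } ∪ { ja + b : 0 ≤ j ≤ k }, and let A ⊆ ℤ be M-avoiding with 0 ∈ A. Define T = A ∩ (⋃_{i=0}^{k−1} [ia+b+1, (i+1)a−1]), U = [ka+2b, (k+1)a+b−1] \ A, and I = { x ∈ [0, b−1] : A ∩ {x, x+a, …, x+ka, x+ka+b} = ∅ }. Then (k+1)|T| ≤ (k+1)|I| + k|U|. -/

import Mathlib

/-- `Sx a b k x = {x, x+a, ..., x+k*a, x+k*a+b}` -/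
def Sx (a b k x : ℤ) : Set ℤ :=
  {y | ∃ j : ℤ, 0 ≤ j ∧ j ≤ k ∧ y = x + j * a} ∪ {x + k * a + b}


/-- small residue determined by value mod e -/
lemma small_eq (e r r' n n' : ℤ) (hr : 1 ≤ r) (hr' : 1 ≤ r')
    (hre : r ≤ e - 1) (hr'e : r' ≤ e - 1)
    (heq : r + n * e = r' + n' * e) : r = r' := by
  have hc : r - r' = (n' - n) * e := by linarith
  rcases lt_trichotomy (n' - n) 0 with h | h | h
  · have h1 : n' - n ≤ -1 := by omega
    have he1 : 0 < e := by linarith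
    nlinarith
  · rw [h] at hc; linarith
  · have h1 : 1 ≤ n' - n := by omega
    have he1 : 0 < e := by linarith
    nlinarith

lemma card_sdiff_comm' (X Y : Finset ℤ) (h : Y.card = X.card) :
    (X \ Y).card = (Y \ X).card := by
  have h1 := Finset.card_sdiff_add_card_inter X Y
  have h2 := Finset.card_sdiff_add_card_inter Y X
  rw [Finset.inter_comm] at h2
  omega

lemma exit_bound : ∀ (K : ℕ) (X : Finset ℤ) (σ m : ℤ → ℤ),
    Set.InjOn σ ↑X →
    (∀ x ∈ X, 1 ≤ m x ∧ m x ≤ (K : ℤ)) →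
    (∀ x ∈ X, σ x ∈ X → m x + 1 ≤ m (σ x)) →
    X.card ≤ K * (X \ X.image σ).card := by
  intro K
  induction K with
  | zero =>
    intro X σ m _ hb _
    have hX : X = ∅ := by
      rw [Finset.eq_empty_iff_forall_notMem]
      intro x hx
      have := hb x hx
      simp at this
      omega
    simp [hX]
  | succ K ih =>
    intro X σ m hinj hb hstep
    classical
    set X' := X.filter (fun x => σ x ∈ X) with hX'
    set Tl := X.filter (fun x => σ x ∉ X) with hTl
    have hXsplit : X'.card + Tl.card = X.card :=
      Finset.card_filter_add_card_filter_not _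
    have hX'sub : X' ⊆ X := Finset.filter_subset _ _
    have hTlsub : Tl ⊆ X := Finset.filter_subset _ _
    have h1 : X'.card ≤ K * (X' \ X'.image σ).card := by
      apply ih X' σ m
      · exact hinj.mono (by exact_mod_cast hX'sub)
      · intro x hx
        rw [hX', Finset.mem_filter] at hx
        refine ⟨(hb x hx.1).1, ?_⟩
        have h2 := hstep x hx.1 hx.2
        have h3 := (hb (σ x) hx.2).2
        push_cast at h3 ⊢
        linarith
      · intro x hx hsx
        exact hstep x (hX'sub hx) (hX'sub hsx)
    have h2 : (X' \ X'.image σ) ⊆ (X \ X.image σ) := by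
      intro x hx
      rw [Finset.mem_sdiff] at hx ⊢
      refine ⟨hX'sub hx.1, ?_⟩
      intro hmem
      rw [Finset.mem_image] at hmem
      obtain ⟨t, htX, hteq⟩ := hmem
      have htX' : t ∈ X' := by
        rw [hX', Finset.mem_filter]
        exact ⟨htX, by rw [hteq]; exact hX'sub hx.1⟩
      exact hx.2 (Finset.mem_image.mpr ⟨t, htX', hteq⟩)
    have h3 : Tl.card ≤ (X \ X.image σ).card := by
      have e1 : (Tl.image σ).card = Tl.card :=
        Finset.card_image_of_injOn (hinj.mono (by exact_mod_cast hTlsub))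
      have e2 : Tl.image σ ⊆ X.image σ \ X := by
        intro s hs
        rw [Finset.mem_image] at hs
        obtain ⟨t, htTl, hteq⟩ := hs
        rw [hTl, Finset.mem_filter] at htTl
        rw [Finset.mem_sdiff]
        exact ⟨Finset.mem_image.mpr ⟨t, htTl.1, hteq⟩, by rw [← hteq]; exact htTl.2⟩
      have e3 : (X.image σ \ X).card = (X \ X.image σ).card :=
        card_sdiff_comm' _ _ (Finset.card_image_of_injOn hinj).symm
      calc Tl.card = (Tl.image σ).card := e1.symm
        _ ≤ (X.image σ \ X).card := Finset.card_le_card e2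
        _ = (X \ X.image σ).card := e3
    calc X.card = X'.card + Tl.card := hXsplit.symm
      _ ≤ K * (X' \ X'.image σ).card + (X \ X.image σ).card := by
          exact Nat.add_le_add h1 h3
      _ ≤ K * (X \ X.image σ).card + (X \ X.image σ).card := by
          exact Nat.add_le_add_right (Nat.mul_le_mul_left K (Finset.card_le_card h2)) _
      _ = (K + 1) * (X \ X.image σ).card := by ring


lemma chain (a b k : ℤ) (A I : Set ℤ)
    (hba : b < a) (hab : a < 2*b) (hk : 1 ≤ k)
    (noA : ∀ x ∈ A, ∀ y ∈ A, ∀ j : ℤ, 1 ≤ j → j ≤ k → x - y ≠ j * a)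
    (noB : ∀ x ∈ A, ∀ y ∈ A, ∀ j : ℤ, 0 ≤ j → j ≤ k → x - y ≠ j * a + b)
    (hIin : ∀ x : ℤ, 0 ≤ x → x ≤ b - 1 → A ∩ Sx a b k x = ∅ → x ∈ I) :
    ∀ (N : ℕ) (x m : ℤ), 0 ≤ x → x < 2*b - a → 1 ≤ m → m ≤ k →
      x + m * a ∈ A → 2*b - a - x ≤ (N : ℤ) →
    (∃ n : ℤ, 1 ≤ n ∧ x + n * (a - b) ∈ I) ∨
    (∃ n m' : ℤ, 1 ≤ n ∧ m ≤ m' ∧ m' ≤ k ∧ 2*b - a ≤ x + n * (a - b) ∧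
      x + n * (a - b) ≤ b - 1 ∧ x + n * (a - b) + m' * a ∈ A) := by
  intro N
  induction N with
  | zero =>
    intro x m hx0 hxd _ _ _ hN
    exfalso; push_cast at hN; linarith
  | succ N ih =>
    intro x m hx0 hxd hm1 hmk hA hN
    by_cases hemp : A ∩ Sx a b k (x + (a - b)) = ∅
    · left
      refine ⟨1, le_refl 1, ?_⟩
      have h := hIin (x + (a - b)) (by linarith) (by linarith) hemp
      have : x + 1 * (a - b) = x + (a - b) := by ring
      rw [this]; exact h
    · obtain ⟨w, hwA, hwS⟩ := Set.nonempty_iff_ne_empty.mpr hemp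
      simp only [Sx, Set.mem_union, Set.mem_setOf_eq, Set.mem_singleton_iff] at hwS
      rcases hwS with ⟨j, hj0, hjk, hweq⟩ | hweq
      · -- w = (x + (a-b)) + j*a
        have hjm : m ≤ j := by
          by_contra hcon
          push_neg at hcon
          apply noB (x + m * a) hA w hwA (m - j - 1) (by omega) (by omega)
          rw [hweq]; ring
        by_cases hx'd : x + (a - b) < 2*b - a
        · have hA' : (x + (a - b)) + j * a ∈ A := by rw [← hweq]; exact hwA
          have hrec := ih (x + (a - b)) j (by linarith) hx'd (by linarith) hjk hA'
            (by push_cast at hN ⊢; linarith)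
          rcases hrec with ⟨n, hn1, hnI⟩ | ⟨n, m', hn1, hmm', hm'k, hlb, hub, hmem⟩
          · left
            refine ⟨n + 1, by linarith, ?_⟩
            have : x + (n + 1) * (a - b) = x + (a - b) + n * (a - b) := by ring
            rw [this]; exact hnI
          · right
            refine ⟨n + 1, m', by linarith, by linarith, hm'k, ?_, ?_, ?_⟩
            · have : x + (n + 1) * (a - b) = x + (a - b) + n * (a - b) := by ring
              rw [this]; exact hlb
            · have : x + (n + 1) * (a - b) = x + (a - b) + n * (a - b) := by ring
              rw [this]; exact hub
            · have : x + (n + 1) * (a - b) + m' * a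
                = x + (a - b) + n * (a - b) + m' * a := by ring
              rw [this]; exact hmem
        · right
          push_neg at hx'd
          refine ⟨1, j, le_refl 1, hjm, hjk, by linarith, by linarith, ?_⟩
          have : x + 1 * (a - b) + j * a = x + (a - b) + j * a := by ring
          rw [this, ← hweq]; exact hwA
      · -- w = (x + (a-b)) + k*a + b : impossible
        exfalso
        apply noA w hwA (x + m * a) hA (k + 1 - m) (by omega) (by omega)
        rw [hweq]; ring


theorem stmt15
    (a b k : ℤ) (ha : 0 < a) (hb : 0 < b) (hba : b < a) (hab : a < 2*b) (hk : 1 ≤ k)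
    (A : Set ℤ) (h0A : (0:ℤ) ∈ A)
    (havoid : ∀ x ∈ A, ∀ y ∈ A,
      ¬ ((∃ j : ℤ, 1 ≤ j ∧ j ≤ k ∧ x - y = j * a) ∨
         (∃ j : ℤ, 0 ≤ j ∧ j ≤ k ∧ x - y = j * a + b)))
    (T U I : Set ℤ)
    (hT : T = A ∩ ⋃ i ∈ Set.Icc (0:ℤ) (k-1), Set.Icc (i*a + b + 1) ((i+1)*a - 1))
    (hU : U = Set.Icc (k*a + 2*b) ((k+1)*a + b - 1) \ A)
    (hI : I = {x ∈ Set.Icc (0:ℤ) (b-1) | A ∩ Sx a b k x = ∅}) :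
    (k + 1) * (T.ncard : ℤ) ≤ (k + 1) * (I.ncard : ℤ) + k * (U.ncard : ℤ) := by
  classical
  have noA : ∀ x ∈ A, ∀ y ∈ A, ∀ j : ℤ, 1 ≤ j → j ≤ k → x - y ≠ j * a := by
    intro x hx y hy j h1 h2 heq
    exact havoid x hx y hy (Or.inl ⟨j, h1, h2, heq⟩)
  have noB : ∀ x ∈ A, ∀ y ∈ A, ∀ j : ℤ, 0 ≤ j → j ≤ k → x - y ≠ j * a + b := by
    intro x hx y hy j h1 h2 heq
    exact havoid x hx y hy (Or.inr ⟨j, h1, h2, heq⟩)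
  -- finiteness
  have hTfin : T.Finite := by
    apply (Set.finite_Icc (0:ℤ) (k*a)).subset
    rw [hT]
    rintro t ⟨-, hti⟩
    simp only [Set.mem_iUnion, Set.mem_Icc, exists_prop] at hti
    obtain ⟨i, ⟨hi0, hik⟩, ht1, ht2⟩ := hti
    have h1 : 0 ≤ i * a := mul_nonneg hi0 (le_of_lt ha)
    have h2 : (i+1) * a ≤ k * a := mul_le_mul_of_nonneg_right (by omega) (le_of_lt ha)
    exact Set.mem_Icc.mpr ⟨by linarith, by linarith⟩
  have hUfin : U.Finite := by
    rw [hU]; exact (Set.finite_Icc (k*a + 2*b) ((k+1)*a + b - 1)).diff (t := A)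
  have hIfin : I.Finite := by
    rw [hI]; exact (Set.finite_Icc (0:ℤ) (b-1)).subset (Set.sep_subset _ _)
  -- structure of T
  set ρ : ℤ → ℤ := fun t => (t - b) % a with hρdef
  have hTmem : ∀ t ∈ T, ∃ i r : ℤ, 0 ≤ i ∧ i ≤ k - 1 ∧ 1 ≤ r ∧ r ≤ a - b - 1 ∧
      t = i * a + b + r ∧ ρ t = r ∧ t ∈ A := by
    intro t ht
    rw [hT] at ht
    obtain ⟨htA, hti⟩ := ht
    simp only [Set.mem_iUnion, Set.mem_Icc, exists_prop] at hti
    obtain ⟨i, ⟨hi0, hik⟩, ht1, ht2⟩ := hti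
    refine ⟨i, t - i * a - b, hi0, hik, by linarith, by linarith, by ring, ?_, htA⟩
    have h1 : t - b = (t - i * a - b) + a * i := by ring
    rw [hρdef]
    simp only
    rw [h1, Int.add_mul_emod_self_left]
    exact Int.emod_eq_of_lt (by linarith) (by linarith)
  set R : Set ℤ := ρ '' T with hRdef
  have hRfin : R.Finite := hTfin.image _
  have hRmem : ∀ r ∈ R, 1 ≤ r ∧ r ≤ a - b - 1 ∧
      ∃ i : ℤ, 0 ≤ i ∧ i ≤ k - 1 ∧ i * a + b + r ∈ A := by
    intro r hr
    obtain ⟨t, htT, hteq⟩ := hr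
    obtain ⟨i, r', hi0, hik, hr1, hr2, hteq', hρt, htA⟩ := hTmem t htT
    have : r = r' := by rw [← hteq, hρt]
    subst this
    exact ⟨hr1, hr2, i, hi0, hik, by rw [← hteq']; exact htA⟩
  have hinjρ : Set.InjOn ρ T := by
    intro t ht t' ht' heq
    obtain ⟨i, r, hi0, hik, hr1, hr2, hteq, hρt, htA⟩ := hTmem t ht
    obtain ⟨i', r', hi0', hik', hr1', hr2', hteq', hρt', htA'⟩ := hTmem t' ht'
    have hrr : r = r' := by rw [← hρt, heq, hρt']
    subst hrr
    rcases lt_trichotomy i i' with h | h | h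
    · exfalso
      apply noA t' htA' t htA (i' - i) (by omega) (by omega)
      rw [hteq, hteq']; ring
    · rw [hteq, hteq', h]
    · exfalso
      apply noA t htA t' htA' (i - i') (by omega) (by omega)
      rw [hteq, hteq']; ring
  have hTR : T.ncard = R.ncard := (Set.ncard_image_of_injOn hinjρ).symm
  -- split R
  set RI : Set ℤ := R ∩ I with hRIdef
  set R' : Set ℤ := R \ I with hR'def
  have hRIfin : RI.Finite := hRfin.inter_of_left _
  have hR'fin : R'.Finite := hRfin.diff
  have hRsplit : R.ncard = RI.ncard + R'.ncard := by
    rw [← Set.ncard_union_eq (Set.disjoint_left.mpr (fun x hx hx' => hx'.2 hx.2))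
      hRIfin hR'fin]
    congr 1
    rw [hRIdef, hR'def, Set.inter_union_diff]
  -- witness for r ∈ R'
  have hwit : ∀ r ∈ R', ∃ j : ℤ, 1 ≤ j ∧ j ≤ k ∧ r + j * a ∈ A ∧
      ∀ i : ℤ, 0 ≤ i → i ≤ k - 1 → i * a + b + r ∈ A → i + 1 ≤ j := by
    intro r hr
    obtain ⟨hrR, hrI⟩ := hr
    obtain ⟨hr1, hr2, i0, hi00, hi0k, hi0A⟩ := hRmem r hrR
    have hne : ¬ (A ∩ Sx a b k r = ∅) := by
      intro hcon
      apply hrI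
      rw [hI]
      exact ⟨Set.mem_Icc.mpr ⟨by linarith, by linarith⟩, hcon⟩
    obtain ⟨w, hwA, hwS⟩ := Set.nonempty_iff_ne_empty.mpr hne
    simp only [Sx, Set.mem_union, Set.mem_setOf_eq, Set.mem_singleton_iff] at hwS
    rcases hwS with ⟨j, hj0, hjk, hweq⟩ | hweq
    · have hall : ∀ i : ℤ, 0 ≤ i → i ≤ k - 1 → i * a + b + r ∈ A → i + 1 ≤ j := by
        intro i hi0 hik hiA
        by_contra hcon
        push_neg at hcon
        apply noB (i * a + b + r) hiA w hwA (i - j) (by omega) (by omega)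
        rw [hweq]; ring
      exact ⟨j, by have := hall i0 hi00 hi0k hi0A; omega, hjk,
        by rw [← hweq]; exact hwA, hall⟩
    · exfalso
      apply noA w hwA (i0 * a + b + r) hi0A (k - i0) (by omega) (by omega)
      rw [hweq]; ring
  -- outcome for r ∈ R'
  have outcome : ∀ r ∈ R',
      (∃ n : ℤ, 1 ≤ n ∧ r + n * (a - b) ∈ I) ∨
      (∃ y m' : ℤ, 2*b - a ≤ y ∧ y ≤ b - 1 ∧ (∃ n : ℤ, 0 ≤ n ∧ y = r + n * (a - b)) ∧
        1 ≤ m' ∧ m' ≤ k ∧ y + m' * a ∈ A ∧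
        ∀ i : ℤ, 0 ≤ i → i ≤ k - 1 → i * a + b + r ∈ A → i + 1 ≤ m') := by
    intro r hr
    obtain ⟨j, hj1, hjk, hjA, hjall⟩ := hwit r hr
    obtain ⟨hrR, hrI⟩ := hr
    obtain ⟨hr1, hr2, -⟩ := hRmem r hrR
    by_cases hrd : r < 2*b - a
    · have hIin : ∀ x : ℤ, 0 ≤ x → x ≤ b - 1 → A ∩ Sx a b k x = ∅ → x ∈ I := by
        intro x h1 h2 h3
        rw [hI]
        exact ⟨Set.mem_Icc.mpr ⟨h1, h2⟩, h3⟩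
      have hrec := chain a b k A I hba hab hk noA noB hIin (2*b - a - r).toNat r j
        (by linarith) hrd hj1 hjk hjA
        (le_of_eq (Int.toNat_of_nonneg (by linarith)).symm)
      rcases hrec with ⟨n, hn1, hnI⟩ | ⟨n, m', hn1, hjm', hm'k, hlb, hub, hmem⟩
      · exact Or.inl ⟨n, hn1, hnI⟩
      · exact Or.inr ⟨r + n * (a - b), m', hlb, hub, ⟨n, by linarith, rfl⟩,
          by linarith, hm'k, hmem,
          fun i h1 h2 h3 => le_trans (hjall i h1 h2 h3) (by linarith)⟩
    · push_neg at hrd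
      exact Or.inr ⟨r, j, hrd, by linarith, ⟨0, le_refl 0, by ring⟩, hj1, hjk,
        hjA, hjall⟩
  -- split R'
  set PI : Set ℤ := {r | ∃ n : ℤ, 1 ≤ n ∧ r + n * (a - b) ∈ I} with hPIdef
  set R'I : Set ℤ := R' ∩ PI with hR'Idef
  set R'U : Set ℤ := R' \ PI with hR'Udef
  have hR'Ifin : R'I.Finite := hR'fin.inter_of_left _
  have hR'Ufin : R'U.Finite := hR'fin.diff
  have hR'split : R'.ncard = R'I.ncard + R'U.ncard := by
    rw [← Set.ncard_union_eq (Set.disjoint_left.mpr (fun x hx hx' => hx'.2 hx.2))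
      hR'Ifin hR'Ufin]
    congr 1
    rw [hR'Idef, hR'Udef, Set.inter_union_diff]
  -- I lower bound
  have hIlow : (RI.ncard : ℤ) + R'I.ncard ≤ I.ncard := by
    have hmem : ∀ r ∈ R'I, ∃ n : ℤ, 1 ≤ n ∧ r + n * (a - b) ∈ I := by
      intro r hr
      exact hr.2
    choose! nI hn1 hn2 using hmem
    set ψ : ℤ → ℤ := fun r => r + nI r * (a - b) with hψdef
    have hinjψ : Set.InjOn ψ R'I := by
      intro r hr r' hr' heq
      obtain ⟨ha1, ha2, -⟩ := hRmem r hr.1.1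
      obtain ⟨hb1, hb2, -⟩ := hRmem r' hr'.1.1
      exact small_eq (a - b) r r' (nI r) (nI r') ha1 hb1 (by linarith) (by linarith) heq
    have hsub : RI ∪ ψ '' R'I ⊆ I := by
      rintro x (hx | ⟨r, hr, rfl⟩)
      · exact hx.2
      · exact hn2 r hr
    have hdisj : Disjoint RI (ψ '' R'I) := by
      rw [Set.disjoint_left]
      rintro x hx ⟨r, hr, hψr⟩
      obtain ⟨ha1, ha2, -⟩ := hRmem x hx.1
      obtain ⟨hb1, hb2, -⟩ := hRmem r hr.1.1
      have hg : 1 * (a - b) ≤ nI r * (a - b) :=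
        mul_le_mul_of_nonneg_right (hn1 r hr) (by linarith)
      have hx' : r + nI r * (a - b) = x := hψr
      linarith
    have e1 : (RI ∪ ψ '' R'I).ncard = RI.ncard + R'I.ncard := by
      rw [Set.ncard_union_eq hdisj hRIfin (hR'Ifin.image _),
        Set.ncard_image_of_injOn hinjψ]
    have e2 := Set.ncard_le_ncard hsub hIfin
    rw [e1] at e2
    exact_mod_cast e2
  -- U lower bound
  have hUlow : (k + 1) * (R'U.ncard : ℤ) ≤ k * U.ncard := by
    have hmemU : ∀ r ∈ R'U, ∃ y m' : ℤ, 2*b - a ≤ y ∧ y ≤ b - 1 ∧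
        (∃ n : ℤ, 0 ≤ n ∧ y = r + n * (a - b)) ∧ 1 ≤ m' ∧ m' ≤ k ∧ y + m' * a ∈ A ∧
        ∀ i : ℤ, 0 ≤ i → i ≤ k - 1 → i * a + b + r ∈ A → i + 1 ≤ m' := by
      intro r hr
      rcases outcome r hr.1 with hL | hR
      · exact absurd hL hr.2
      · exact hR
    choose! yf mf hy1 hy2 hy3 hm1 hm2 hyA hmall using hmemU
    set σ : ℤ → ℤ := fun r => yf r - (2*b - a) with hσdef
    have hinjσ : Set.InjOn σ R'U := by
      intro r hr r' hr' heq
      have heqy : yf r = yf r' := by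
        have h1 : yf r - (2*b - a) = yf r' - (2*b - a) := heq
        linarith
      obtain ⟨n, hn0, hneq⟩ := hy3 r hr
      obtain ⟨n', hn0', hneq'⟩ := hy3 r' hr'
      obtain ⟨ha1, ha2, -⟩ := hRmem r hr.1.1
      obtain ⟨hb1, hb2, -⟩ := hRmem r' hr'.1.1
      apply small_eq (a - b) r r' n n' ha1 hb1 (by linarith) (by linarith)
      rw [← hneq, ← hneq', heqy]
    set S : Set ℤ := R ∪ σ '' R'U with hSdef
    have hSfin : S.Finite := hRfin.union (hR'Ufin.image _)
    have huS : ∀ s ∈ S, (k*a + 2*b + s) ∈ U := by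
      rintro s (hs | ⟨r, hr, rfl⟩)
      · obtain ⟨h1, h2, i, hi0, hik, hiA⟩ := hRmem s hs
        rw [hU]
        refine ⟨Set.mem_Icc.mpr ⟨by linarith, by linarith⟩, ?_⟩
        intro hA'
        apply noB (k*a + 2*b + s) hA' (i*a + b + s) hiA (k - i) (by omega) (by omega)
        ring
      · have h1 := hy1 r hr
        have h2 := hy2 r hr
        rw [hU]
        constructor
        · refine Set.mem_Icc.mpr ⟨by simp only [hσdef]; linarith, by simp only [hσdef]; linarith⟩
        · intro hA'
          apply noA (k*a + 2*b + σ r) hA' (yf r + mf r * a) (hyA r hr)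
            (k + 1 - mf r) (by have h1 := hm1 r hr; have h2 := hm2 r hr; omega)
            (by have h1 := hm1 r hr; have h2 := hm2 r hr; omega)
          simp only [hσdef]; ring
    have hstep : ∀ r ∈ R'U, σ r ∈ R'U → mf r + 1 ≤ mf (σ r) := by
      intro r hr hsr
      obtain ⟨hz1, hz2, i0, hi00, hi0k, hi0A⟩ := hRmem (σ r) hsr.1.1
      have hi0m : mf r ≤ i0 := by
        by_contra hcon
        push_neg at hcon
        apply noB (yf r + mf r * a) (hyA r hr) (i0 * a + b + σ r) hi0A
          (mf r - 1 - i0) (by omega) (by have := hm2 r hr; omega)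
        simp only [hσdef]; ring
      have := hmall (σ r) hsr i0 hi00 hi0k hi0A
      omega
    -- finset counting
    set X : Finset ℤ := hR'Ufin.toFinset with hXdef
    have hXcoe : (↑X : Set ℤ) = R'U := hR'Ufin.coe_toFinset
    have hXcard : X.card = R'U.ncard := by
      rw [← Set.ncard_coe_finset X, hXcoe]
    have hexit : X.card ≤ k.toNat * (X \ X.image σ).card := by
      apply exit_bound k.toNat X σ mf
      · rw [hXcoe]; exact hinjσ
      · intro x hx
        have hxm : x ∈ R'U := by rwa [Set.Finite.mem_toFinset] at hx
        rw [Int.toNat_of_nonneg (by linarith : (0:ℤ) ≤ k)]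
        exact ⟨hm1 x hxm, hm2 x hxm⟩
      · intro x hx hsx
        rw [Set.Finite.mem_toFinset] at hx hsx
        exact hstep x hx hsx
    have hinjX : Set.InjOn σ ↑X := by rw [hXcoe]; exact hinjσ
    have hswap : (X \ X.image σ).card = (X.image σ \ X).card :=
      card_sdiff_comm' _ _ (Finset.card_image_of_injOn hinjX)
    have hXScard : (X ∪ X.image σ).card = X.card + (X.image σ \ X).card := by
      have h := Finset.card_sdiff_add_card (X.image σ) X
      rw [Finset.union_comm] at h
      omega
    have hXSsub : (↑(X ∪ X.image σ) : Set ℤ) ⊆ S := by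
      intro x hx
      rw [Finset.coe_union, Finset.coe_image, hXcoe] at hx
      rcases hx with hx | hx
      · exact Or.inl hx.1.1
      · exact Or.inr hx
    have hS1 : (X ∪ X.image σ).card ≤ S.ncard := by
      rw [← Set.ncard_coe_finset (X ∪ X.image σ)]
      exact Set.ncard_le_ncard hXSsub hSfin
    have hS2 : S.ncard ≤ U.ncard := by
      have himg : (fun s => k*a + 2*b + s) '' S ⊆ U := by
        rintro x ⟨s, hs, rfl⟩
        exact huS s hs
      calc S.ncard = ((fun s => k*a + 2*b + s) '' S).ncard :=
            (Set.ncard_image_of_injOn ((add_right_injective (k*a + 2*b)).injOn)).symm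
        _ ≤ U.ncard := Set.ncard_le_ncard himg hUfin
    -- integer arithmetic
    have c1 : (X.card : ℤ) ≤ k * ((X.image σ \ X).card : ℤ) := by
      have := hexit
      rw [hswap] at this
      have h2 : ((X.card : ℕ) : ℤ) ≤ ((k.toNat * (X.image σ \ X).card : ℕ) : ℤ) :=
        Int.ofNat_le.mpr this
      push_cast at h2
      rwa [Int.toNat_of_nonneg (by linarith : (0:ℤ) ≤ k)] at h2
    have c2 : (X.card : ℤ) + ((X.image σ \ X).card : ℤ) ≤ (U.ncard : ℤ) := by
      have h3 : (X ∪ X.image σ).card ≤ U.ncard := le_trans hS1 hS2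
      rw [hXScard] at h3
      exact_mod_cast h3
    have c3 : k * ((X.card : ℤ) + ((X.image σ \ X).card : ℤ)) ≤ k * (U.ncard : ℤ) :=
      mul_le_mul_of_nonneg_left c2 (by linarith)
    rw [← hXcard]
    push_cast
    nlinarith [c1, c3]
  -- final assembly
  have h4 : (k+1) * ((RI.ncard : ℤ) + R'I.ncard) ≤ (k+1) * I.ncard :=
    mul_le_mul_of_nonneg_left hIlow (by linarith)
  have e1 : (T.ncard : ℤ) = (RI.ncard : ℤ) + R'I.ncard + R'U.ncard := by
    rw [hTR, hRsplit, hR'split]; push_cast; ring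
  calc (k + 1) * (T.ncard : ℤ)
      = (k+1) * ((RI.ncard : ℤ) + R'I.ncard) + (k+1) * R'U.ncard := by rw [e1]; ring
    _ ≤ (k+1) * (I.ncard : ℤ) + k * U.ncard := add_le_add h4 hUlow
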